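/- For every ε > 0 there exist δ > 0 and n₀ ∈ ℕ such that for every n ≥ n₀, the number of distinct words w ∈ {0,1}ⁿ that occur in z (i.e., w = (z(t+1), …, z(t+n)) for some t ≥ 0) and in which the number of indices i with w_i = 0 is at most (ρ + δ)·n, does not exceed 2^{ε·n}. -/

import Mathlib

open Classical Filter Topology

lemma aux_sum_choose (n m : ℕ) (x : ℝ) (hx0 : 0 < x) (hx1 : x ≤ 1) :
    (∑ i ∈ Finset.range (m+1), (n.choose i : ℝ)) ≤ x⁻¹ ^ m * (1+x) ^ n := by
  have hxm : (0:ℝ) < x ^ m := pow_pos hx0 m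
  rw [inv_pow, ← div_eq_inv_mul, le_div_iff₀ hxm]
  calc (∑ i ∈ Finset.range (m+1), (n.choose i : ℝ)) * x ^ m
      = ∑ i ∈ Finset.range (m+1), (n.choose i : ℝ) * x ^ m := by rw [Finset.sum_mul]
    _ ≤ ∑ i ∈ Finset.range (m+1), (n.choose i : ℝ) * x ^ i := by
        apply Finset.sum_le_sum
        intro i hi
        have : x ^ m ≤ x ^ i :=
          pow_le_pow_of_le_one hx0.le hx1 (Nat.lt_succ_iff.mp (Finset.mem_range.mp hi))
        exact mul_le_mul_of_nonneg_left this (by positivity)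
    _ ≤ ∑ i ∈ Finset.range (max m n + 1), (n.choose i : ℝ) * x ^ i := by
        apply Finset.sum_le_sum_of_subset_of_nonneg
        · exact Finset.range_subset_range.mpr (by omega)
        · intro i _ _; positivity
    _ = ∑ i ∈ Finset.range (n + 1), (n.choose i : ℝ) * x ^ i := by
        refine (Finset.sum_subset (Finset.range_subset_range.mpr (by omega)) ?_).symm
        intro i _ hi
        have : n < i := by simp only [Finset.mem_range] at hi ⊢; omega
        simp [Nat.choose_eq_zero_of_lt this]
    _ = (1+x)^n := by
        rw [add_comm (1:ℝ) x, add_pow]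
        exact Finset.sum_congr rfl (fun i _ => by ring)

lemma aux_residue (n t q r : ℕ) (hq : 0 < q) :
    n / q ≤ (Finset.univ.filter (fun i : Fin n => (t + 1 + (i:ℕ)) % q = r % q)).card := by
  rcases Nat.eq_zero_or_pos (n / q) with h0 | hpos
  · simp [h0]
  have hn : 0 < n := by
    rcases Nat.eq_zero_or_pos n with h | h
    · subst h; simp at hpos
    · exact h
  have hle : t + 1 ≤ q * (t+1) := Nat.le_mul_of_pos_left _ hq
  set X := r + q * (t+1) - (t+1) with hX
  set i₀ := X % q with hi0
  have hi0lt : i₀ < q := Nat.mod_lt _ hq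
  have hbnd : ∀ s, s < n / q → i₀ + s * q < n := by
    intro s hs
    have h1 : s + 1 ≤ n / q := hs
    have h2 : (s + 1) * q ≤ (n / q) * q := Nat.mul_le_mul_right _ h1
    have h3 : (n / q) * q ≤ n := Nat.div_mul_le_self n q
    nlinarith
  have hmod : ∀ s, (t + 1 + (i₀ + s * q)) % q = r % q := by
    intro s
    have h1 : t + 1 + (i₀ + s * q) ≡ t + 1 + i₀ [MOD q] := by
      have e : t + 1 + (i₀ + s * q) = (t + 1 + i₀) + s * q := by ring
      rw [e]; simp [Nat.ModEq, Nat.add_mul_mod_self_right]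
    have h2 : t + 1 + i₀ ≡ t + 1 + X [MOD q] := Nat.ModEq.add_left _ (Nat.mod_modEq X q)
    have h3 : t + 1 + X = r + q * (t + 1) := by omega
    have h4 : r + q * (t+1) ≡ r [MOD q] := by
      simp [Nat.ModEq, Nat.add_mul_mod_self_left]
    exact (h1.trans (h2.trans (h3 ▸ h4)))
  have := Finset.card_le_card_of_injOn
    (f := fun s : ℕ => (⟨(i₀ + s * q) % n, Nat.mod_lt _ hn⟩ : Fin n))
    (s := Finset.range (n / q))
    (t := Finset.univ.filter (fun i : Fin n => (t + 1 + (i:ℕ)) % q = r % q))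
    (by
      intro s hs
      have hs' := Finset.mem_range.mp hs
      have hlt := hbnd s hs'
      simp only [Finset.mem_filter, Finset.mem_univ, true_and]
      simp only [Finset.coe_filter, Finset.mem_univ, true_and, Set.mem_setOf_eq, Nat.mod_eq_of_lt hlt]
      exact hmod s)
    (by
      intro s hs s' hs' hEq
      simp only [Finset.coe_range, Set.mem_Iio] at hs hs'
      have h1 := hbnd s hs
      have h2 := hbnd s' hs'
      have heq2 : (i₀ + s * q) % n = (i₀ + s' * q) % n := congrArg Fin.val hEq
      rw [Nat.mod_eq_of_lt h1, Nat.mod_eq_of_lt h2] at heq2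
      have := Nat.eq_of_mul_eq_mul_right hq (by omega : s * q = s' * q)
      omega)
  simpa using this

set_option maxHeartbeats 2000000 in
theorem few_words_with_small_frequency_of_zeros
    (p : ℕ → ℕ)
    (hp1 : 3 ≤ p 1)
    (hpmono : ∀ k : ℕ, 1 ≤ k → p k < p (k + 1))
    (hpdvd : ∀ k : ℕ, 1 ≤ k → p k ∣ p (k + 1))
    (b : ℕ → ℕ) (hb1 : b 1 = 1)
    (hbrec : ∀ k : ℕ, 1 ≤ k → IsLeast
      {n : ℕ | 1 ≤ n ∧ ∀ j : ℕ, 1 ≤ j → j ≤ k → ¬∃ m : ℕ, n = b j + m * p j} (b (k + 1)))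
    (z : ℕ → ℕ)
    (hz : ∀ n : ℕ, (z n = 1 ↔ ∃ k : ℕ, 1 ≤ k ∧ b k = n) ∧ (z n = 1 ∨ z n = 0)) :
    ∀ ε : ℝ, 0 < ε → ∃ δ : ℝ, 0 < δ ∧ ∃ n₀ : ℕ, ∀ n : ℕ, n₀ ≤ n →
      ((Set.ncard {w : Fin n → ℕ |
          (∃ t : ℕ, ∀ i : Fin n, w i = z (t + 1 + (i : ℕ))) ∧
          ((Finset.univ.filter (fun i : Fin n => w i = 0)).card : ℝ) ≤
            ((∑' j : ℕ, (1 : ℝ) / p (j + 1)) + δ) * n} : ℝ))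
        ≤ 2 ^ (ε * n) := by
  classical
  -- basic p facts
  have hp_pos : ∀ k, 1 ≤ k → 0 < p k := by
    intro k hk
    induction k with
    | zero => omega
    | succ k ih =>
      rcases Nat.eq_zero_or_pos k with h | h
      · subst h
        have h1 : p (0+1) = p 1 := by norm_num
        omega
      · exact lt_trans (ih h) (hpmono k h)
  have hp_dvd : ∀ j k, 1 ≤ j → j ≤ k → p j ∣ p k := by
    intro j k hj hjk
    induction k with
    | zero => omega
    | succ k ih =>
      rcases Nat.lt_or_ge j (k+1) with h | h
      · have hk1 : 1 ≤ k := by omega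
        exact (ih (by omega)).trans (hpdvd k hk1)
      · have hjk' : j = k+1 := by omega
        subst hjk'; exact dvd_rfl
  have hp_double : ∀ k, 1 ≤ k → 2 * p k ≤ p (k+1) := by
    intro k hk
    obtain ⟨c, hc⟩ := hpdvd k hk
    have hlt := hpmono k hk
    have hpk := hp_pos k hk
    have hc2 : 2 ≤ c := by
      by_contra hcon
      push_neg at hcon
      have h1 : p k * c ≤ p k * 1 := Nat.mul_le_mul_left _ (by omega)
      rw [hc] at hlt
      omega
    calc 2 * p k = p k * 2 := by ring
      _ ≤ p k * c := Nat.mul_le_mul_left _ hc2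
      _ = p (k+1) := hc.symm
  have hp_geom : ∀ k, 1 ≤ k → ∀ i, 2^i * p k ≤ p (k+i) := by
    intro k hk i
    induction i with
    | zero => simp
    | succ i ih =>
      show 2^(i+1) * p k ≤ p (k+i+1)
      calc 2^(i+1) * p k = 2 * (2^i * p k) := by ring
        _ ≤ 2 * p (k+i) := Nat.mul_le_mul_left _ ih
        _ ≤ p (k+i+1) := hp_double (k+i) (by omega)
  have hp_2pow : ∀ K : ℕ, 2^K ≤ p (K+1) := by
    intro K
    have h1 := hp_geom 1 le_rfl K
    have h2 : 2^K ≤ 2^K * p 1 := Nat.le_mul_of_pos_right _ (by omega)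
    rw [add_comm] at h1
    omega
  -- basic b facts
  have hb_pos : ∀ k, 1 ≤ k → 1 ≤ b k := by
    intro k hk
    rcases Nat.lt_or_ge k 2 with h | h
    · have : k = 1 := by omega
      subst this; omega
    · obtain ⟨k', rfl⟩ : ∃ k', k = k'+1 := ⟨k-1, by omega⟩
      exact (hbrec k' (by omega)).1.1
  have hb_notmem : ∀ k, 1 ≤ k → ∀ j, 1 ≤ j → j ≤ k → ¬∃ m, b (k+1) = b j + m * p j :=
    fun k hk => (hbrec k hk).1.2
  have hb_succ : ∀ k, 1 ≤ k → b k < b (k+1) := by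
    intro k hk
    have hne : b (k+1) ≠ b k := by
      intro h
      exact hb_notmem k hk k hk le_rfl ⟨0, by omega⟩
    have hle : b k ≤ b (k+1) := by
      rcases Nat.lt_or_ge k 2 with h | h
      · have : k = 1 := by omega
        subst this; rw [hb1]; exact hb_pos 2 (by omega)
      · obtain ⟨k', rfl⟩ : ∃ k', k = k'+1 := ⟨k-1, by omega⟩
        have hk' : 1 ≤ k' := by omega
        refine (hbrec k' hk').2 ⟨(hbrec (k'+1) (by omega)).1.1, ?_⟩
        intro j hj hjk
        exact (hbrec (k'+1) (by omega)).1.2 j hj (by omega)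
    omega
  have hb_mono : ∀ j k, 1 ≤ j → j < k → b j < b k := by
    intro j k hj hjk
    induction k with
    | zero => omega
    | succ k ih =>
      rcases Nat.lt_or_ge j k with h | h
      · exact lt_trans (ih h) (hb_succ k (by omega))
      · have : j = k := by omega
        subst this; exact hb_succ j hj
  have hb_avoid : ∀ j k, 1 ≤ j → j < k → ∀ m, b k ≠ b j + m * p j := by
    intro j k hj hjk m h
    obtain ⟨k', rfl⟩ : ∃ k', k = k'+1 := ⟨k-1, by omega⟩
    exact hb_notmem k' (by omega) j hj (by omega) ⟨m, h⟩
  -- z is zero at non-initial points of progressions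
  have hz_zero : ∀ j q, 1 ≤ j → b j < q → q % p j = b j % p j → z q = 0 := by
    intro j q hj hq hmod
    rcases (hz q).2 with h1 | h0
    · exfalso
      obtain ⟨k, hk, hbk⟩ := (hz q).1.mp h1
      rcases lt_trichotomy k j with h | h | h
      · have := hb_mono k j hk h; omega
      · subst h; omega
      · have hmod' : b j ≡ q [MOD p j] := (hmod : q ≡ b j [MOD p j]).symm
        have hdvd := (Nat.modEq_iff_dvd' hq.le).mp hmod'
        obtain ⟨m, hm⟩ := hdvd
        rw [mul_comm] at hm
        exact hb_avoid j k hj h m (by omega)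
    · exact h0
  -- ρ facts
  have hf_le : ∀ j : ℕ, (1:ℝ) / p (j+1) ≤ (1/2)^j := by
    intro j
    have h1 : (2:ℕ)^j ≤ p (j+1) := hp_2pow j
    have h3 : (2:ℝ)^j ≤ (p (j+1) : ℝ) := by exact_mod_cast h1
    have h2 : (0:ℝ) < 2^j := by positivity
    calc (1:ℝ) / p (j+1) ≤ 1 / 2^j := one_div_le_one_div_of_le h2 h3
      _ = (1/2)^j := by rw [one_div_pow]
  have hf_nonneg : ∀ j : ℕ, (0:ℝ) ≤ 1 / p (j+1) := by
    intro j; positivity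
  have hsum : Summable (fun j : ℕ => (1:ℝ) / p (j+1)) :=
    Summable.of_nonneg_of_le hf_nonneg hf_le summable_geometric_two
  set ρ : ℝ := ∑' j : ℕ, (1:ℝ) / p (j+1) with hρdef
  have hρ_nonneg : 0 ≤ ρ := tsum_nonneg hf_nonneg
  have htail : ∀ K : ℕ, ρ ≤ (∑ j ∈ Finset.range K, (1:ℝ)/p (j+1)) + 2 / p (K+1) := by
    intro K
    have hsplit := Summable.sum_add_tsum_nat_add (f := fun j : ℕ => (1:ℝ)/p (j+1)) K hsum
    have hsumtail : Summable (fun i : ℕ => (1:ℝ)/p (i+K+1)) := by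
      simpa using (summable_nat_add_iff (f := fun j : ℕ => (1:ℝ)/p (j+1)) K).2 hsum
    have hbound : ∀ i : ℕ, (1:ℝ)/p (i+K+1) ≤ (1/2)^i * (1 / p (K+1)) := by
      intro i
      have h1 : 2^i * p (K+1) ≤ p (K+1+i) := hp_geom (K+1) (by omega) i
      have h1' : 2^i * p (K+1) ≤ p (i+K+1) := by
        have e : K+1+i = i+K+1 := by omega
        rw [e] at h1; exact h1
      have hpos1 : (0:ℝ) < 2^i * p (K+1) := by
        have := hp_pos (K+1) (by omega)
        positivity
      have h2 : ((2:ℝ)^i * p (K+1)) ≤ (p (i+K+1) : ℝ) := by exact_mod_cast h1'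
      calc (1:ℝ)/p (i+K+1) ≤ 1 / (2^i * p (K+1)) := one_div_le_one_div_of_le hpos1 h2
        _ = (1/2)^i * (1 / p (K+1)) := by
            rw [one_div_pow, one_div_mul_one_div]
    have hgsum : Summable (fun i : ℕ => ((1:ℝ)/2)^i * (1 / p (K+1))) :=
      summable_geometric_two.mul_right _
    have h3 : (∑' i : ℕ, (1:ℝ)/p (i+K+1)) ≤ ∑' i : ℕ, ((1:ℝ)/2)^i * (1 / p (K+1)) :=
      Summable.tsum_le_tsum hbound hsumtail hgsum
    have h4 : (∑' i : ℕ, ((1:ℝ)/2)^i * (1 / p (K+1))) = 2 / p (K+1) := by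
      rw [tsum_mul_right, tsum_geometric_two]
      ring
    have h5 : (∑ j ∈ Finset.range K, (1:ℝ)/p (j+1)) + ∑' i : ℕ, (1:ℝ)/p (i+K+1) = ρ := by
      rw [hρdef]; exact hsplit
    linarith [h3, h5, h4]
  intro ε hε
  -- choice of constants
  set c : ℝ := (2:ℝ) ^ (ε/4) with hcdef
  have hc1 : 1 < c := by
    rw [hcdef]
    exact (Real.one_lt_rpow_iff_of_pos (by norm_num)).mpr (Or.inl ⟨by norm_num, by linarith⟩)
  set x : ℝ := min 1 (c - 1) with hxdef
  have hx0 : 0 < x := lt_min one_pos (by linarith)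
  have hx1 : x ≤ 1 := min_le_left _ _
  have h1x : 1 + x ≤ c := by
    have := min_le_right (1:ℝ) (c-1)
    linarith
  set y : ℝ := x⁻¹ with hydef
  have hy0 : 0 < y := by positivity
  have hy1 : 1 ≤ y := by rw [hydef]; exact (one_le_inv₀ hx0).mpr hx1
  have hylog : 0 ≤ Real.log y := Real.log_nonneg hy1
  set δ : ℝ := ε * Real.log 2 / (8 * (Real.log y + 1)) with hδdef
  have hlog2 : 0 < Real.log 2 := Real.log_pos one_lt_two
  have hden : 0 < 8 * (Real.log y + 1) := by linarith
  have hδ : 0 < δ := div_pos (mul_pos hε hlog2) hden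
  have hkey : 2 * δ * Real.log y ≤ ε/4 * Real.log 2 := by
    have h2 : 2 * δ * Real.log y = (2 * (ε * Real.log 2) * Real.log y) / (8 * (Real.log y + 1)) := by
      rw [hδdef]; ring
    rw [h2, div_le_iff₀ hden]
    have hA : 0 ≤ ε * Real.log 2 := le_of_lt (mul_pos hε hlog2)
    nlinarith [hA, hylog]
  obtain ⟨K₀, hK₀⟩ := pow_unbounded_of_one_lt (R := ℝ) (2/δ) one_lt_two
  set K : ℕ := K₀ + 1 with hKdef
  have hK1 : 1 ≤ K := by omega
  have hKtail : 2 / (p (K+1) : ℝ) ≤ δ := by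
    have hppos : 0 < p (K+1) := hp_pos (K+1) (by omega)
    have h1 : (2:ℝ)^K₀ ≤ (2:ℝ)^K := pow_le_pow_right₀ one_le_two (by omega)
    have h2 : (2:ℕ)^K ≤ p (K+1) := hp_2pow K
    have h2' : (2:ℝ)^K ≤ (p (K+1):ℝ) := by exact_mod_cast h2
    have h3 : 2/δ < (p (K+1):ℝ) := lt_of_lt_of_le hK₀ (le_trans h1 h2')
    have hpposR : (0:ℝ) < (p (K+1):ℝ) := by exact_mod_cast hppos
    rw [div_le_iff₀ hpposR]
    rw [div_lt_iff₀ hδ] at h3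
    nlinarith
  have hρK : ρ - δ ≤ ∑ j ∈ Finset.range K, (1:ℝ)/p (j+1) := by
    have := htail K
    linarith
  refine ⟨δ, hδ, ?_⟩
  set P : ℕ := p K with hPdef
  have hP : 0 < P := hp_pos K hK1
  set B : ℕ := b K + 1 with hBdef
  set Creal : ℝ := P * y^K + B with hCdef
  have hyK1 : (1:ℝ) ≤ y^K := one_le_pow₀ hy1
  have hC1 : (1:ℝ) ≤ Creal := by
    have hP1 : (1:ℝ) ≤ P := by exact_mod_cast hP
    have hB0 : (0:ℝ) ≤ B := by positivity
    rw [hCdef]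
    nlinarith
  have hCpos : (0:ℝ) < Creal := by linarith
  refine ⟨⌈Real.logb 2 Creal / (ε/2)⌉₊, ?_⟩
  intro n hn
  have hCn : Creal ≤ (2:ℝ) ^ (ε/2 * n) := by
    have h2 : Real.logb 2 Creal / (ε/2) ≤ (⌈Real.logb 2 Creal / (ε/2)⌉₊ : ℝ) := Nat.le_ceil _
    have hn' : ((⌈Real.logb 2 Creal / (ε/2)⌉₊ : ℕ):ℝ) ≤ (n:ℝ) := by exact_mod_cast hn
    have h3 : Real.logb 2 Creal / (ε/2) ≤ (n:ℝ) := le_trans h2 hn'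
    have heps : (0:ℝ) < ε/2 := by linarith
    have h4 : Real.logb 2 Creal ≤ ε/2 * n := by
      rw [div_le_iff₀ heps] at h3
      linarith [h3]
    calc Creal = 2 ^ Real.logb 2 Creal := (Real.rpow_logb (by norm_num) (by norm_num) hCpos).symm
      _ ≤ 2 ^ (ε/2 * n) := Real.rpow_le_rpow_of_exponent_le one_le_two h4
  set m : ℕ := ⌊2*δ*(n:ℝ)⌋₊ + K with hmdef
  set Q : ℕ → Fin n → Prop :=
    fun t i => ∃ j, 1 ≤ j ∧ j ≤ K ∧ (t + 1 + (i:ℕ)) % p j = b j % p j with hQdef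
  have hQcongr : ∀ t t', t % P = t' % P → ∀ i : Fin n, Q t i → Q t' i := by
    intro t t' hr i hQ
    obtain ⟨j, hj1, hjK, hmod⟩ := hQ
    refine ⟨j, hj1, hjK, ?_⟩
    have hdj : p j ∣ P := hPdef ▸ hp_dvd j K hj1 hjK
    have h1 : t ≡ t' [MOD P] := hr
    have h2 : t ≡ t' [MOD p j] := Nat.ModEq.of_dvd hdj h1
    have h3 : t + 1 + (i:ℕ) ≡ t' + 1 + (i:ℕ) [MOD p j] := by
      have := h2.add_right (1 + (i:ℕ))
      simpa [← add_assoc] using this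
    calc (t' + 1 + (i:ℕ)) % p j = (t + 1 + (i:ℕ)) % p j := h3.symm
      _ = b j % p j := hmod
  have hQzero : ∀ t, B ≤ t → ∀ i : Fin n, Q t i → z (t + 1 + (i:ℕ)) = 0 := by
    intro t hBt i hQ
    obtain ⟨j, hj1, hjK, hmod⟩ := hQ
    apply hz_zero j _ hj1 _ hmod
    have h1 : b j ≤ b K := by
      rcases Nat.eq_or_lt_of_le hjK with h | h
      · subst h; exact le_rfl
      · exact (hb_mono j K hj1 h).le
    have hBB : B = b K + 1 := hBdef
    omega
  -- the key cardinality estimate for the "sparse zero" index set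
  have key : ∀ t : ℕ, B ≤ t → ∀ w : Fin n → ℕ, (∀ i : Fin n, w i = z (t + 1 + (i:ℕ))) →
      ((Finset.univ.filter (fun i : Fin n => w i = 0)).card : ℝ) ≤ (ρ + δ) * n →
      (Finset.univ.filter (fun i : Fin n => w i = 0 ∧ ¬ Q t i)).card ≤ m := by
    intro t hBt w hw hfreq
    set zerosF := Finset.univ.filter (fun i : Fin n => w i = 0) with hzF
    set covF := Finset.univ.filter (fun i : Fin n => Q t i) with hcF
    have hcovzero : covF ⊆ zerosF := by
      intro i hi
      rw [hcF, Finset.mem_filter] at hi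
      rw [hzF, Finset.mem_filter]
      exact ⟨Finset.mem_univ i, by rw [hw i]; exact hQzero t hBt i hi.2⟩
    have hSdiff : (Finset.univ.filter (fun i : Fin n => w i = 0 ∧ ¬ Q t i)) = zerosF \ covF := by
      ext i
      rw [hzF, hcF]
      simp only [Finset.mem_filter, Finset.mem_sdiff, Finset.mem_univ, true_and]
    -- lower bound on the covered set
    have hdisj : ∀ j ∈ Finset.Icc 1 K, ∀ j' ∈ Finset.Icc 1 K, j ≠ j' →
        Disjoint (Finset.univ.filter (fun i : Fin n => (t + 1 + (i:ℕ)) % p j = b j % p j))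
          (Finset.univ.filter (fun i : Fin n => (t + 1 + (i:ℕ)) % p j' = b j' % p j')) := by
      have main : ∀ j j', 1 ≤ j → j < j' → j' ≤ K → ∀ i : Fin n,
          (t + 1 + (i:ℕ)) % p j = b j % p j → (t + 1 + (i:ℕ)) % p j' = b j' % p j' → False := by
        intro j j' hj hjj' hj'K i hmj hmj'
        have hd : p j ∣ p j' := hp_dvd j j' hj hjj'.le
        have hmj'M : Nat.ModEq (p j') (t + 1 + (i:ℕ)) (b j') := hmj'
        have hmjM : Nat.ModEq (p j) (t + 1 + (i:ℕ)) (b j) := hmj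
        have h1 : b j' ≡ t + 1 + (i:ℕ) [MOD p j'] := hmj'M.symm
        have h2 : b j' ≡ t + 1 + (i:ℕ) [MOD p j] := Nat.ModEq.of_dvd hd h1
        have h3 : b j ≡ b j' [MOD p j] := hmjM.symm.trans h2.symm
        have hlt : b j < b j' := hb_mono j j' hj hjj'
        obtain ⟨m', hm'⟩ := (Nat.modEq_iff_dvd' hlt.le).mp h3
        rw [mul_comm] at hm'
        exact hb_avoid j j' hj hjj' m' (by omega)
      intro j hj j' hj' hne
      rw [Finset.mem_Icc] at hj hj'
      rw [Finset.disjoint_left]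
      intro i hi hi'
      rw [Finset.mem_filter] at hi hi'
      rcases lt_or_gt_of_ne hne with h | h
      · exact main j j' hj.1 h hj'.2 i hi.2 hi'.2
      · exact main j' j hj'.1 h hj.2 i hi'.2 hi.2
    have hcovbig : ∑ j ∈ Finset.Icc 1 K, n / p j ≤ covF.card := by
      have hsub : (Finset.Icc 1 K).biUnion
          (fun j => Finset.univ.filter (fun i : Fin n => (t + 1 + (i:ℕ)) % p j = b j % p j))
          ⊆ covF := by
        intro i hi
        rw [Finset.mem_biUnion] at hi
        obtain ⟨j, hj, hij⟩ := hi
        rw [Finset.mem_Icc] at hj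
        rw [Finset.mem_filter] at hij
        rw [hcF, Finset.mem_filter]
        exact ⟨Finset.mem_univ i, ⟨j, hj.1, hj.2, hij.2⟩⟩
      calc ∑ j ∈ Finset.Icc 1 K, n / p j
          ≤ ∑ j ∈ Finset.Icc 1 K,
            (Finset.univ.filter (fun i : Fin n => (t + 1 + (i:ℕ)) % p j = b j % p j)).card := by
            apply Finset.sum_le_sum
            intro j hj
            rw [Finset.mem_Icc] at hj
            exact aux_residue n t (p j) (b j) (hp_pos j hj.1)
        _ = ((Finset.Icc 1 K).biUnion
            (fun j => Finset.univ.filter (fun i : Fin n => (t + 1 + (i:ℕ)) % p j = b j % p j))).card :=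
            (Finset.card_biUnion hdisj).symm
        _ ≤ covF.card := Finset.card_le_card hsub
    -- real lower bound for covF.card
    have hcovreal : (ρ - δ) * n - K ≤ (covF.card : ℝ) := by
      have h1 : ∀ j ∈ Finset.Icc 1 K, (n:ℝ)/(p j) - 1 ≤ ((n / p j : ℕ) : ℝ) := by
        intro j hj
        rw [Finset.mem_Icc] at hj
        have hq := hp_pos j hj.1
        have hlt := Nat.lt_div_mul_add (a := n) hq
        have h2 : (n:ℝ) < (n / p j : ℕ) * p j + p j := by exact_mod_cast hlt
        have hqR : (0:ℝ) < p j := by exact_mod_cast hq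
        rw [sub_le_iff_le_add, div_le_iff₀ hqR]
        nlinarith
      have h2 : ∑ j ∈ Finset.Icc 1 K, ((n:ℝ)/(p j) - 1) ≤ ∑ j ∈ Finset.Icc 1 K, ((n / p j : ℕ):ℝ) :=
        Finset.sum_le_sum h1
      have h3 : ∑ j ∈ Finset.Icc 1 K, ((n:ℝ)/(p j) - 1)
          = (∑ j ∈ Finset.Icc 1 K, (1:ℝ)/(p j)) * n - K := by
        rw [Finset.sum_sub_distrib, Finset.sum_mul]
        simp only [Finset.sum_const, Nat.card_Icc, smul_eq_mul, mul_one]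
        congr 1
        · apply Finset.sum_congr rfl
          intro j _
          ring
        · norm_num
      have h4 : (∑ j ∈ Finset.Icc 1 K, (1:ℝ)/(p j)) = ∑ j ∈ Finset.range K, (1:ℝ)/p (j+1) := by
        rw [← Finset.Ico_add_one_right_eq_Icc, Finset.sum_Ico_eq_sum_range]
        simp [add_comm]
      have h5 : (ρ - δ) * n ≤ (∑ j ∈ Finset.Icc 1 K, (1:ℝ)/(p j)) * n := by
        apply mul_le_mul_of_nonneg_right _ (Nat.cast_nonneg n)
        rw [h4]; exact hρK
      have h6 : (∑ j ∈ Finset.Icc 1 K, ((n / p j : ℕ):ℝ)) ≤ (covF.card : ℝ) := by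
        have := hcovbig
        calc (∑ j ∈ Finset.Icc 1 K, ((n / p j : ℕ):ℝ))
            = ((∑ j ∈ Finset.Icc 1 K, n / p j : ℕ) : ℝ) := by push_cast; ring
          _ ≤ (covF.card : ℝ) := by exact_mod_cast hcovbig
      linarith
    -- conclude
    rw [hSdiff, Finset.card_sdiff_of_subset hcovzero]
    have hcast : ((zerosF.card - covF.card : ℕ) : ℝ) = (zerosF.card : ℝ) - (covF.card : ℝ) := by
      rw [Nat.cast_sub (Finset.card_le_card hcovzero)]
    have h7 : ((zerosF.card - covF.card : ℕ) : ℝ) ≤ 2*δ*(n:ℝ) + (K:ℝ) := by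
      rw [hcast]
      have : (zerosF.card : ℝ) ≤ (ρ + δ) * n := hfreq
      linarith
    have h8 : zerosF.card - covF.card ≤ ⌊2*δ*(n:ℝ) + (K:ℝ)⌋₊ := Nat.le_floor h7
    have h9 : ⌊2*δ*(n:ℝ) + (K:ℝ)⌋₊ = ⌊2*δ*(n:ℝ)⌋₊ + K := by
      rw [Nat.floor_add_natCast (by positivity) K]
    rw [hmdef]
    omega
  -- the word set and the injection
  set Wset : Set (Fin n → ℕ) := {w : Fin n → ℕ |
      (∃ t : ℕ, ∀ i : Fin n, w i = z (t + 1 + (i : ℕ))) ∧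
      ((Finset.univ.filter (fun i : Fin n => w i = 0)).card : ℝ) ≤ (ρ + δ) * n} with hWdef
  set SF : (Fin n → ℕ) → ℕ → Finset (Fin n) :=
    fun w t => Finset.univ.filter (fun i : Fin n => w i = 0 ∧ ¬ Q t i) with hSFdef
  set F : (Fin n → ℕ) → (ℕ × Finset (Fin n)) ⊕ ℕ := fun w =>
    if h : ∃ t, B ≤ t ∧ ∀ i : Fin n, w i = z (t + 1 + (i:ℕ)) then
      Sum.inl (h.choose % P, SF w h.choose)
    else if h2 : ∃ t, ∀ i : Fin n, w i = z (t + 1 + (i:ℕ)) then Sum.inr h2.choose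
    else Sum.inr 0 with hFdef
  set T : Finset ((ℕ × Finset (Fin n)) ⊕ ℕ) :=
    ((Finset.range P) ×ˢ (Finset.univ.filter (fun S : Finset (Fin n) => S.card ≤ m))).disjSum
      (Finset.range B) with hTdef
  have hmaps : ∀ w ∈ Wset, F w ∈ (T : Set ((ℕ × Finset (Fin n)) ⊕ ℕ)) := by
    intro w hw
    simp only [hWdef, Set.mem_setOf_eq] at hw
    obtain ⟨⟨t, ht⟩, hfreq⟩ := hw
    simp only [hFdef]
    by_cases h : ∃ t, B ≤ t ∧ ∀ i : Fin n, w i = z (t + 1 + (i:ℕ))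
    · rw [dif_pos h, hTdef]
      rw [Finset.mem_coe, Finset.inl_mem_disjSum, Finset.mem_product]
      refine ⟨Finset.mem_range.mpr (Nat.mod_lt _ hP), ?_⟩
      rw [Finset.mem_filter]
      exact ⟨Finset.mem_univ _, key h.choose h.choose_spec.1 w h.choose_spec.2 hfreq⟩
    · rw [dif_neg h,
        dif_pos (⟨t, ht⟩ : ∃ t, ∀ i : Fin n, w i = z (t + 1 + (i:ℕ))), hTdef]
      rw [Finset.mem_coe, Finset.inr_mem_disjSum, Finset.mem_range]
      push_neg at h
      by_contra hc
      push_neg at hc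
      obtain ⟨i, hi⟩ := h _ hc
      exact hi ((⟨t, ht⟩ : ∃ t, ∀ i : Fin n, w i = z (t + 1 + (i:ℕ))).choose_spec i)
  have hinj : Set.InjOn F Wset := by
    intro w hw w' hw' hFeq
    simp only [hWdef, Set.mem_setOf_eq] at hw hw'
    obtain ⟨⟨tw, htw⟩, hfw⟩ := hw
    obtain ⟨⟨tw', htw'⟩, hfw'⟩ := hw'
    simp only [hFdef] at hFeq
    by_cases h : ∃ t, B ≤ t ∧ ∀ i : Fin n, w i = z (t + 1 + (i:ℕ))
    · by_cases h' : ∃ t, B ≤ t ∧ ∀ i : Fin n, w' i = z (t + 1 + (i:ℕ))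
      · rw [dif_pos h, dif_pos h'] at hFeq
        rw [Sum.inl.injEq, Prod.mk.injEq] at hFeq
        obtain ⟨hr, hS⟩ := hFeq
        have hsp1 := h.choose_spec
        have hsp2 := h'.choose_spec
        funext i
        by_cases hq : Q h.choose i
        · have hq2 : Q h'.choose i := hQcongr h.choose h'.choose hr i hq
          rw [hsp1.2 i, hsp2.2 i, hQzero h.choose hsp1.1 i hq, hQzero h'.choose hsp2.1 i hq2]
        · have hq2 : ¬ Q h'.choose i := fun hc => hq (hQcongr h'.choose h.choose hr.symm i hc)
          by_cases h0 : w i = 0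
          · have hiS : i ∈ SF w h.choose := by
              simp only [hSFdef]
              exact Finset.mem_filter.mpr ⟨Finset.mem_univ _, h0, hq⟩
            have hiS' : i ∈ SF w' h'.choose := hS ▸ hiS
            simp only [hSFdef] at hiS'
            rw [Finset.mem_filter] at hiS'
            rw [h0, hiS'.2.1]
          · have h0' : w' i ≠ 0 := by
              intro hc
              have hiS' : i ∈ SF w' h'.choose := by
                simp only [hSFdef]
                exact Finset.mem_filter.mpr ⟨Finset.mem_univ _, hc, hq2⟩
              have hiS : i ∈ SF w h.choose := hS ▸ hiS'
              simp only [hSFdef] at hiS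
              rw [Finset.mem_filter] at hiS
              exact h0 hiS.2.1
            have hw1 : w i = 1 := by
              rcases (hz (h.choose + 1 + (i:ℕ))).2 with h1 | h2
              · rw [hsp1.2 i]; exact h1
              · exact absurd ((hsp1.2 i).trans h2) h0
            have hw1' : w' i = 1 := by
              rcases (hz (h'.choose + 1 + (i:ℕ))).2 with h1 | h2
              · rw [hsp2.2 i]; exact h1
              · exact absurd ((hsp2.2 i).trans h2) h0'
            rw [hw1, hw1']
      · rw [dif_pos h, dif_neg h',
          dif_pos (⟨tw', htw'⟩ : ∃ t, ∀ i : Fin n, w' i = z (t + 1 + (i:ℕ)))] at hFeq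
        simp at hFeq
    · by_cases h' : ∃ t, B ≤ t ∧ ∀ i : Fin n, w' i = z (t + 1 + (i:ℕ))
      · rw [dif_neg h, dif_pos h',
          dif_pos (⟨tw, htw⟩ : ∃ t, ∀ i : Fin n, w i = z (t + 1 + (i:ℕ)))] at hFeq
        simp at hFeq
      · rw [dif_neg h, dif_neg h',
          dif_pos (⟨tw, htw⟩ : ∃ t, ∀ i : Fin n, w i = z (t + 1 + (i:ℕ))),
          dif_pos (⟨tw', htw'⟩ : ∃ t, ∀ i : Fin n, w' i = z (t + 1 + (i:ℕ)))] at hFeq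
        rw [Sum.inr.injEq] at hFeq
        have hsp1 := (⟨tw, htw⟩ : ∃ t, ∀ i : Fin n, w i = z (t + 1 + (i:ℕ))).choose_spec
        have hsp2 := (⟨tw', htw'⟩ : ∃ t, ∀ i : Fin n, w' i = z (t + 1 + (i:ℕ))).choose_spec
        funext i
        rw [hsp1 i, hsp2 i, hFeq]
  have hcard := Set.ncard_le_ncard_of_injOn F hmaps hinj T.finite_toSet
  rw [Set.ncard_coe_finset] at hcard
  have hfS : (Finset.univ.filter (fun S : Finset (Fin n) => S.card ≤ m)).card
      ≤ ∑ i ∈ Finset.range (m+1), Nat.choose n i := by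
    have hsub : Finset.univ.filter (fun S : Finset (Fin n) => S.card ≤ m)
        ⊆ (Finset.range (m+1)).biUnion
          (fun i => Finset.powersetCard i (Finset.univ : Finset (Fin n))) := by
      intro S hS
      rw [Finset.mem_filter] at hS
      exact Finset.mem_biUnion.mpr ⟨S.card, Finset.mem_range.mpr (by omega),
        Finset.mem_powersetCard.mpr ⟨Finset.subset_univ S, rfl⟩⟩
    calc (Finset.univ.filter (fun S : Finset (Fin n) => S.card ≤ m)).card
        ≤ ((Finset.range (m+1)).biUnion
          (fun i => Finset.powersetCard i (Finset.univ : Finset (Fin n)))).card :=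
          Finset.card_le_card hsub
      _ ≤ ∑ i ∈ Finset.range (m+1), (Finset.powersetCard i (Finset.univ : Finset (Fin n))).card :=
          Finset.card_biUnion_le
      _ = ∑ i ∈ Finset.range (m+1), Nat.choose n i := by
          apply Finset.sum_congr rfl
          intro i _
          rw [Finset.card_powersetCard, Finset.card_univ, Fintype.card_fin]
  have hTcard : T.card ≤ P * (∑ i ∈ Finset.range (m+1), Nat.choose n i) + B := by
    rw [hTdef, Finset.card_disjSum, Finset.card_product, Finset.card_range, Finset.card_range]
    have := Nat.mul_le_mul_left P hfS
    omega
  have hNreal : (Wset.ncard : ℝ) ≤ P * (∑ i ∈ Finset.range (m+1), (Nat.choose n i : ℝ)) + B := by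
    have h1 : (Wset.ncard : ℝ) ≤ (T.card : ℝ) := by exact_mod_cast hcard
    have h3 : (T.card : ℝ) ≤ P * (∑ i ∈ Finset.range (m+1), (Nat.choose n i : ℝ)) + B := by
      have := hTcard
      push_cast
      exact_mod_cast hTcard
    linarith
  have hchoose := aux_sum_choose n m x hx0 hx1
  have hyKpos : (0:ℝ) < y^K := by positivity
  have hym : y^m ≤ (2:ℝ) ^ (ε/4 * n) * y^K := by
    have h2 : y^(⌊2*δ*(n:ℝ)⌋₊) ≤ y ^ ((2*δ*(n:ℝ)) : ℝ) := by
      rw [← Real.rpow_natCast y ⌊2*δ*(n:ℝ)⌋₊]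
      exact Real.rpow_le_rpow_of_exponent_le hy1 (Nat.floor_le (by positivity))
    have h3 : y ^ ((2*δ*(n:ℝ)) : ℝ) ≤ (2:ℝ) ^ (ε/4 * n) := by
      rw [Real.rpow_def_of_pos hy0, Real.rpow_def_of_pos (by norm_num : (0:ℝ) < 2)]
      apply Real.exp_le_exp.mpr
      have hn0 : (0:ℝ) ≤ n := Nat.cast_nonneg n
      nlinarith [hkey, hn0, hylog]
    calc y^m = y^(⌊2*δ*(n:ℝ)⌋₊) * y^K := by rw [hmdef, pow_add]
      _ ≤ y ^ ((2*δ*(n:ℝ)) : ℝ) * y^K := mul_le_mul_of_nonneg_right h2 (le_of_lt hyKpos)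
      _ ≤ (2:ℝ) ^ (ε/4 * n) * y^K := mul_le_mul_of_nonneg_right h3 (le_of_lt hyKpos)
  have h1xn : (1+x)^n ≤ (2:ℝ) ^ (ε/4 * n) := by
    calc (1+x)^n ≤ c^n := pow_le_pow_left₀ (by positivity) h1x n
      _ = (2:ℝ) ^ (ε/4 * n) := by
          rw [hcdef, ← Real.rpow_natCast ((2:ℝ) ^ (ε/4)) n, ← Real.rpow_mul (by norm_num)]
  have hsum_bound : (∑ i ∈ Finset.range (m+1), (Nat.choose n i : ℝ))
      ≤ ((2:ℝ) ^ (ε/4 * n) * y^K) * ((2:ℝ) ^ (ε/4 * n)) := by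
    calc (∑ i ∈ Finset.range (m+1), (Nat.choose n i : ℝ)) ≤ x⁻¹ ^ m * (1+x)^n := hchoose
      _ = y^m * (1+x)^n := by rw [hydef]
      _ ≤ ((2:ℝ) ^ (ε/4 * n) * y^K) * ((2:ℝ) ^ (ε/4 * n)) := by
          apply mul_le_mul hym h1xn (by positivity) (by positivity)
  have hrpow_halfpos : (0:ℝ) < (2:ℝ) ^ (ε/2 * n) := Real.rpow_pos_of_pos (by norm_num) _
  have hquarter : (2:ℝ) ^ (ε/4 * n) * (2:ℝ) ^ (ε/4 * n) = (2:ℝ) ^ (ε/2 * n) := by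
    rw [← Real.rpow_add (by norm_num)]
    congr 1
    ring
  have hhalf : (2:ℝ) ^ (ε/2 * n) * (2:ℝ) ^ (ε/2 * n) = (2:ℝ) ^ (ε * n) := by
    rw [← Real.rpow_add (by norm_num)]
    congr 1
    ring
  have hone_le : (1:ℝ) ≤ (2:ℝ) ^ (ε/2 * n) := by
    have h0 : (2:ℝ) ^ (0:ℝ) ≤ (2:ℝ) ^ (ε/2 * n) :=
      Real.rpow_le_rpow_of_exponent_le one_le_two (by positivity)
    rwa [Real.rpow_zero] at h0
  have hPnn : (0:ℝ) ≤ P := Nat.cast_nonneg P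
  have hBnn : (0:ℝ) ≤ B := Nat.cast_nonneg B
  calc (Wset.ncard : ℝ)
      ≤ P * (∑ i ∈ Finset.range (m+1), (Nat.choose n i : ℝ)) + B := hNreal
    _ ≤ P * (((2:ℝ) ^ (ε/4 * n) * y^K) * ((2:ℝ) ^ (ε/4 * n))) + B :=
        add_le_add_left (mul_le_mul_of_nonneg_left hsum_bound hPnn) _
    _ = (P * y^K) * ((2:ℝ) ^ (ε/4 * n) * (2:ℝ) ^ (ε/4 * n)) + B := by ring
    _ = (P * y^K) * (2:ℝ) ^ (ε/2 * n) + B := by rw [hquarter]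
    _ ≤ (P * y^K) * (2:ℝ) ^ (ε/2 * n) + B * (2:ℝ) ^ (ε/2 * n) := by
        nlinarith [hone_le, hBnn]
    _ = Creal * (2:ℝ) ^ (ε/2 * n) := by rw [hCdef]; ring
    _ ≤ (2:ℝ) ^ (ε/2 * n) * (2:ℝ) ^ (ε/2 * n) :=
        mul_le_mul_of_nonneg_right hCn (le_of_lt hrpow_halfpos)
    _ = (2:ℝ) ^ (ε * n) := hhalf
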